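/- Conversely, two queue types with the same multiset of entries that agree on the per-pair subsequence for every ordered pair of roles (p, q) are congruent: if for all (p,q) the subsequence of entries from p to q in Q equals that in Q', then Q ≡ Q'. -/

import Mathlib

/- Queue types of the Maty multiparty session type system.  A queue type is a
list of entries `p→q:ℓ⟨A⟩` (sender, receiver, label, payload type).  Queue
congruence is generated by swapping adjacent entries whose (sender, receiver)
pairs differ, closed under reflexivity, symmetry and transitivity. -/

abbrev Role := ℕ
abbrev Label := ℕ
abbrev Ty := ℕ

structure QEntry where
  sender : Role
  receiver : Role
  label : Label
  payload : Ty
deriving DecidableEq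

abbrev Queue := List QEntry

/-- One swap of adjacent entries with distinct (sender, receiver) pairs. -/
inductive QSwap : Queue → Queue → Prop
  | swap (Q₁ Q₂ : Queue) (e₁ e₂ : QEntry)
      (h : e₁.sender ≠ e₂.sender ∨ e₁.receiver ≠ e₂.receiver) :
      QSwap (Q₁ ++ e₁ :: e₂ :: Q₂) (Q₁ ++ e₂ :: e₁ :: Q₂)

/-- Queue congruence: reflexive-symmetric-transitive closure of `QSwap`. -/
def QCong : Queue → Queue → Prop := Relation.EqvGen QSwap

/-- The subsequence of entries sent from `p` to `q`, in order. -/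
def pairFilter (p q : Role) (Q : Queue) : Queue :=
  Q.filter (fun e => decide (e.sender = p ∧ e.receiver = q))

lemma qcong_cons (a : QEntry) {L L' : Queue} (h : QCong L L') :
    QCong (a :: L) (a :: L') := by
  induction h with
  | rel x y hxy =>
    cases hxy with
    | swap Q₁ Q₂ e₁ e₂ hne =>
      exact Relation.EqvGen.rel _ _ (QSwap.swap (a :: Q₁) Q₂ e₁ e₂ hne)
  | refl x => exact Relation.EqvGen.refl _
  | symm x y _ ih => exact Relation.EqvGen.symm _ _ ih
  | trans x y z _ _ ih₁ ih₂ => exact Relation.EqvGen.trans _ _ _ ih₁ ih₂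

lemma qcong_bubble (e : QEntry) : ∀ (A B : Queue),
    (∀ x ∈ A, x.sender ≠ e.sender ∨ x.receiver ≠ e.receiver) →
    QCong (A ++ e :: B) (e :: (A ++ B)) := by
  intro A
  induction A with
  | nil => intro B _; exact Relation.EqvGen.refl _
  | cons a A ih =>
    intro B hA
    have h1 : QCong (a :: (A ++ e :: B)) (a :: (e :: (A ++ B))) :=
      qcong_cons a (ih B (fun x hx => hA x (List.mem_cons_of_mem a hx)))
    have hne := hA a List.mem_cons_self
    have h2 : QSwap ([] ++ a :: e :: (A ++ B)) ([] ++ e :: a :: (A ++ B)) :=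
      QSwap.swap [] (A ++ B) a e hne
    exact Relation.EqvGen.trans _ _ _ h1 (Relation.EqvGen.rel _ _ h2)

/-- two queues with the same multiset of entries that agree on the
per-pair subsequence for every ordered pair of roles are congruent. -/
theorem pairFilter_qcong (Q Q' : Queue)
    (hperm : Q.Perm Q')
    (hfil : ∀ p q : Role, pairFilter p q Q = pairFilter p q Q') :
    QCong Q Q' := by
  induction Q' generalizing Q with
  | nil =>
    have : Q = [] := List.Perm.eq_nil hperm
    subst this; exact Relation.EqvGen.refl _
  | cons e Q' ih =>
    -- the filter for e's pair on Q starts with e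
    have hf := hfil e.sender e.receiver
    have hmatch : (fun x : QEntry =>
        decide (x.sender = e.sender ∧ x.receiver = e.receiver)) e = true := by simp
    have hf' : pairFilter e.sender e.receiver Q =
        e :: pairFilter e.sender e.receiver Q' := by
      rw [hf]; unfold pairFilter; rw [List.filter_cons, if_pos hmatch]
    obtain ⟨A, B, hQ, hA, _, hB⟩ := List.filter_eq_cons_iff.mp hf'
    subst hQ
    have hA' : ∀ x ∈ A, x.sender ≠ e.sender ∨ x.receiver ≠ e.receiver := by
      intro x hx
      have := hA x hx
      simp only [decide_eq_true_eq] at this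
      by_contra hc
      push_neg at hc
      exact this ⟨hc.1, hc.2⟩
    have hbub := qcong_bubble e A B hA'
    have hperm2 : (A ++ B).Perm Q' := by
      have h1 : (A ++ e :: B).Perm (e :: (A ++ B)) := List.perm_middle
      exact (h1.symm.trans hperm).cons_inv
    have hfil2 : ∀ p q : Role, pairFilter p q (A ++ B) = pairFilter p q Q' := by
      intro p q
      by_cases hpq : e.sender = p ∧ e.receiver = q
      · obtain ⟨hp, hq⟩ := hpq; subst hp; subst hq
        unfold pairFilter at hB ⊢
        rw [List.filter_append]
        have hAnil : A.filter (fun x : QEntry =>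
            decide (x.sender = e.sender ∧ x.receiver = e.receiver)) = [] := by
          apply List.filter_eq_nil_iff.mpr
          intro x hx
          exact hA x hx
        rw [hAnil, List.nil_append, hB]
      · have hfe : (fun x : QEntry =>
            decide (x.sender = p ∧ x.receiver = q)) e = false := by
          simpa using hpq
        have := hfil p q
        unfold pairFilter at this ⊢
        rw [List.filter_append] at this ⊢
        simp only [List.filter_cons, hfe, Bool.false_eq_true, if_false] at this
        exact this
    exact Relation.EqvGen.trans _ _ _ hbub (qcong_cons e (ih (A ++ B) hperm2 hfil2))
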